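/- Let t_1, …, t_{n+1} be pairwise distinct real numbers, set rel_gap := min_{i≠j} |t_i − t_j|/(|t_i| + |t_j|) and κ := 1/rel_gap, and let θ ≥ 0 and t'_i = t_i(1 + δ_i) with |δ_i| ≤ θ for i = 1, …, n+1. Fix i with 1 ≤ i ≤ n+1 and suppose (i−1)·κ·θ < 1. Then the diagonal entries p_i := ∏_{k=1}^{i−1}(t_i − t_k) and p'_i := ∏_{k=1}^{i−1}(t'_i − t'_k) of the bidiagonal decompositions satisfy |p'_i − p_i| ≤ ((i−1)κθ/(1 − (i−1)κθ))·|p_i| (empty products equal 1). -/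

import Mathlib

open Finset

private lemma prod_perturb_aux (x : ℝ) (hx : 0 ≤ x) (a b : ℕ → ℝ) :
    ∀ s : Finset ℕ, (∀ k ∈ s, |b k - a k| ≤ x * |a k|) →
    |(∏ k ∈ s, b k) - ∏ k ∈ s, a k| ≤ ((1 + x) ^ s.card - 1) * |∏ k ∈ s, a k| := by
  intro s
  induction s using Finset.induction_on with
  | empty => simp
  | insert j s hj ih =>
    intro h
    have hbj := h j (Finset.mem_insert_self j s)
    have hs := ih (fun k hk => h k (Finset.mem_insert_of_mem hk))
    rw [Finset.prod_insert hj, Finset.prod_insert hj, Finset.card_insert_of_notMem hj]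
    have key : b j * (∏ k ∈ s, b k) - a j * (∏ k ∈ s, a k)
        = b j * ((∏ k ∈ s, b k) - ∏ k ∈ s, a k) + (b j - a j) * (∏ k ∈ s, a k) := by ring
    have habs : |b j * (∏ k ∈ s, b k) - a j * (∏ k ∈ s, a k)|
        ≤ |b j| * |(∏ k ∈ s, b k) - ∏ k ∈ s, a k| + |b j - a j| * |∏ k ∈ s, a k| := by
      rw [key]
      calc _ ≤ |b j * ((∏ k ∈ s, b k) - ∏ k ∈ s, a k)| + |(b j - a j) * (∏ k ∈ s, a k)| :=
              abs_add_le _ _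
        _ = _ := by rw [abs_mul, abs_mul]
    have hBj : |b j| ≤ (1 + x) * |a j| := by
      have := abs_sub_abs_le_abs_sub (b j) (a j)
      nlinarith [abs_nonneg (a j)]
    have hC : (1 : ℝ) ≤ (1 + x) ^ s.card := one_le_pow₀ (by linarith)
    have hPp : (0 : ℝ) ≤ |∏ k ∈ s, a k| := abs_nonneg _
    have hD : (0 : ℝ) ≤ |(∏ k ∈ s, b k) - ∏ k ∈ s, a k| := abs_nonneg _
    have hBn : (0 : ℝ) ≤ |b j| := abs_nonneg _
    have hAn : (0 : ℝ) ≤ |a j| := abs_nonneg _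
    rw [abs_mul]
    have hpow : (1 + x) ^ (s.card + 1) = (1 + x) * (1 + x) ^ s.card := by ring
    rw [hpow]
    nlinarith [mul_le_mul hBj hs hD (by nlinarith : (0:ℝ) ≤ (1 + x) * |a j|),
      mul_le_mul_of_nonneg_right hbj hPp]

set_option maxHeartbeats 1000000

/-- perturbation bound for the diagonal entries
`p_i = ∏_{k=1}^{i−1}(t_i − t_k)` of the bidiagonal decomposition of the Newton
collocation matrix: if `(i−1)·κ·θ < 1` with `κ = relgap⁻¹`, then
`|p'_i − p_i| ≤ ((i−1)κθ/(1 − (i−1)κθ))·|p_i|`. Here `relgap` is the minimum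
of `|t i − t j|/(|t i| + |t j|)` over `i ≠ j` (expressed via `IsLeast`).
(1-based node indexing: nodes `t 1, …, t (n+1)`.) -/
theorem newton_bidiagonal_diagonal_entry_perturbation
    (n : ℕ) (t : ℕ → ℝ)
    (ht : ∀ i j, 1 ≤ i → i ≤ n + 1 → 1 ≤ j → j ≤ n + 1 → i ≠ j → t i ≠ t j)
    (relgap : ℝ)
    (hrg : IsLeast {x : ℝ | ∃ i ∈ Finset.Icc 1 (n + 1), ∃ j ∈ Finset.Icc 1 (n + 1),
      i ≠ j ∧ x = |t i - t j| / (|t i| + |t j|)} relgap)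
    (θ : ℝ) (hθ : 0 ≤ θ)
    (δ : ℕ → ℝ) (hδ : ∀ i, 1 ≤ i → i ≤ n + 1 → |δ i| ≤ θ)
    (t' : ℕ → ℝ) (ht' : ∀ i, 1 ≤ i → i ≤ n + 1 → t' i = t i * (1 + δ i))
    (i : ℕ) (hi1 : 1 ≤ i) (hi2 : i ≤ n + 1)
    (hsmall : ((i : ℝ) - 1) * relgap⁻¹ * θ < 1) :
    |(∏ k ∈ Finset.Icc 1 (i - 1), (t' i - t' k)) -
      ∏ k ∈ Finset.Icc 1 (i - 1), (t i - t k)| ≤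
    ((i : ℝ) - 1) * relgap⁻¹ * θ / (1 - ((i : ℝ) - 1) * relgap⁻¹ * θ) *
      |∏ k ∈ Finset.Icc 1 (i - 1), (t i - t k)| := by
  -- relgap is positive
  have hrgpos : 0 < relgap := by
    obtain ⟨a, ha, b, hb, hab, hx⟩ := hrg.1
    simp only [Finset.mem_Icc] at ha hb
    have hne : t a ≠ t b := ht a b ha.1 ha.2 hb.1 hb.2 hab
    have hnum : 0 < |t a - t b| := abs_pos.2 (sub_ne_zero.2 hne)
    have hden : 0 < |t a| + |t b| := by
      rcases lt_or_eq_of_le (add_nonneg (abs_nonneg (t a)) (abs_nonneg (t b))) with h | h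
      · exact h
      · exfalso
        have h1 : t a = 0 := abs_eq_zero.1 (by nlinarith [abs_nonneg (t a), abs_nonneg (t b)])
        have h2 : t b = 0 := abs_eq_zero.1 (by nlinarith [abs_nonneg (t a), abs_nonneg (t b)])
        exact hne (h1.trans h2.symm)
    rw [hx]
    exact div_pos hnum hden
  set x : ℝ := relgap⁻¹ * θ with hxdef
  have hxnn : 0 ≤ x := mul_nonneg (inv_nonneg.2 hrgpos.le) hθ
  -- per-factor bound
  have hfac : ∀ k ∈ Finset.Icc 1 (i - 1),
      |(t' i - t' k) - (t i - t k)| ≤ x * |t i - t k| := by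
    intro k hk
    simp only [Finset.mem_Icc] at hk
    have hki : k ≠ i := by omega
    have hk2 : k ≤ n + 1 := by omega
    rw [ht' i hi1 hi2, ht' k hk.1 hk2]
    have hdiff : t i * (1 + δ i) - t k * (1 + δ k) - (t i - t k)
        = t i * δ i - t k * δ k := by ring
    rw [hdiff]
    have h1 : |t i * δ i - t k * δ k| ≤ θ * (|t i| + |t k|) := by
      calc |t i * δ i - t k * δ k| ≤ |t i * δ i| + |t k * δ k| := abs_sub _ _
        _ = |t i| * |δ i| + |t k| * |δ k| := by rw [abs_mul, abs_mul]
        _ ≤ |t i| * θ + |t k| * θ := by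
            gcongr
            · exact hδ i hi1 hi2
            · exact hδ k hk.1 hk2
        _ = θ * (|t i| + |t k|) := by ring
    have h2 : relgap ≤ |t i - t k| / (|t i| + |t k|) := by
      apply hrg.2
      exact ⟨i, Finset.mem_Icc.2 ⟨hi1, hi2⟩, k, Finset.mem_Icc.2 ⟨hk.1, hk2⟩, hki.symm, rfl⟩
    have hden : 0 < |t i| + |t k| := by
      rcases lt_or_eq_of_le (add_nonneg (abs_nonneg (t i)) (abs_nonneg (t k))) with h | h
      · exact h
      · exfalso
        have hne : t i ≠ t k := ht i k hi1 hi2 hk.1 hk2 hki.symm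
        have h1' : t i = 0 := abs_eq_zero.1 (by nlinarith [abs_nonneg (t i), abs_nonneg (t k)])
        have h2' : t k = 0 := abs_eq_zero.1 (by nlinarith [abs_nonneg (t i), abs_nonneg (t k)])
        exact hne (h1'.trans h2'.symm)
    have h3 : relgap * (|t i| + |t k|) ≤ |t i - t k| := (le_div_iff₀ hden).1 h2
    have h4 : θ * (|t i| + |t k|) ≤ x * |t i - t k| := by
      rw [hxdef]
      have : (|t i| + |t k|) ≤ relgap⁻¹ * |t i - t k| := by
        rw [inv_mul_eq_div, le_div_iff₀ hrgpos]
        nlinarith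
      calc θ * (|t i| + |t k|) ≤ θ * (relgap⁻¹ * |t i - t k|) :=
            mul_le_mul_of_nonneg_left this hθ
        _ = relgap⁻¹ * θ * |t i - t k| := by ring
    linarith
  -- apply the product lemma
  have hprod := prod_perturb_aux x hxnn (fun k => t i - t k) (fun k => t' i - t' k)
    (Finset.Icc 1 (i - 1)) hfac
  have hcard : (Finset.Icc 1 (i - 1)).card = i - 1 := by
    rw [Nat.card_Icc]; omega
  rw [hcard] at hprod
  -- cast: (i : ℝ) - 1 = ((i - 1 : ℕ) : ℝ)
  set m : ℕ := i - 1 with hm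
  have hcast : ((i : ℝ) - 1) = (m : ℝ) := by
    rw [hm]
    push_cast [Nat.cast_sub hi1]
    ring
  rw [hcast] at hsmall ⊢
  have hmx : (m : ℝ) * x < 1 := by
    have : (m : ℝ) * relgap⁻¹ * θ = (m : ℝ) * x := by rw [hxdef]; ring
    linarith [hsmall, this.symm.le]
  have hmx' : (m : ℝ) * relgap⁻¹ * θ = (m : ℝ) * x := by rw [hxdef]; ring
  rw [hmx']
  -- key inequality: (1+x)^m - 1 ≤ m x / (1 - m x)
  have hkey : (1 + x) ^ m - 1 ≤ (m : ℝ) * x / (1 - (m : ℝ) * x) := by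
    rcases Nat.eq_zero_or_pos m with hm0 | hmpos
    · simp [hm0]
    · have hx1 : x < 1 := by
        have hm1 : (1 : ℝ) ≤ (m : ℝ) := by exact_mod_cast hmpos
        nlinarith
      have hbern : 1 - (m : ℝ) * x ≤ (1 - x) ^ m := by
        have h := one_add_mul_le_pow (a := -x) (by linarith) m
        have e1 : 1 + (m : ℝ) * -x = 1 - (m : ℝ) * x := by ring
        have e2 : (1 : ℝ) + -x = 1 - x := by ring
        rw [e1, e2] at h
        exact h
      have hpos : 0 < 1 - (m : ℝ) * x := by linarith
      have hprodle : (1 - (m : ℝ) * x) * (1 + x) ^ m ≤ 1 := by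
        calc (1 - (m : ℝ) * x) * (1 + x) ^ m ≤ (1 - x) ^ m * (1 + x) ^ m := by
              apply mul_le_mul_of_nonneg_right hbern (pow_nonneg (by linarith) _)
          _ = ((1 - x) * (1 + x)) ^ m := (mul_pow _ _ _).symm
          _ = (1 - x ^ 2) ^ m := by congr 1; ring
          _ ≤ 1 := by
              apply pow_le_one₀ (by nlinarith) (by nlinarith)
      rw [le_div_iff₀ hpos]
      nlinarith [hprodle]
  exact le_trans (by simpa using hprod) (mul_le_mul_of_nonneg_right hkey (abs_nonneg _))
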